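/- Let N ⊴ G abstract groups, Q a finite dimensional kN-module, and suppose there is a kG-module M with M|_N ≅ Q ⊕ R for some kN-module R, together with a kG-submodule V of M contained in Q and containing soc^N Q. Define α : G → End_k(Q) by α(g)(v) = σ(g·v) where σ : M → Q is the projection along R. Then each α(g) is invertible, and α satisfies: α(1) = 1_Q, α(g)ρ(n)α(g)⁻¹ = ρ(gng⁻¹), α(gn) = α(g)ρ(n), and α(g)v = g·v for v ∈ V. In particular (Q,V) is strongly G-stable. -/

import Mathlib

/-- A subspace `W` of the `kG`-module `M` is `N`-stable if it is preserved by the action of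
every element of the subgroup `N`. -/
def NStable {k : Type*} [Field k] {M : Type*} [AddCommGroup M] [Module k M]
    {G : Type*} [Group G] (N : Subgroup G) (π : G →* (M →ₗ[k] M)ˣ)
    (W : Submodule k M) : Prop :=
  ∀ n : ↥N, ∀ x ∈ W, (π ↑n).1 x ∈ W

/-- The `N`-socle of an `N`-stable subspace `Q` of `M`: the sum of all simple `N`-submodules
of `Q`. -/
noncomputable def socN {k : Type*} [Field k] {M : Type*} [AddCommGroup M] [Module k M]
    {G : Type*} [Group G] (N : Subgroup G) (π : G →* (M →ₗ[k] M)ˣ)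
    (Q : Submodule k M) : Submodule k M :=
  sSup {W : Submodule k M | W ≤ Q ∧ NStable N π W ∧ ⊥ < W ∧
    ∀ T : Submodule k M, NStable N π T → T ≤ W → T = ⊥ ∨ T = W}

set_option maxHeartbeats 2000000 in
/-- if `M` is a `kG`-module with `M|_N = Q ⊕ R` as `N`-modules, and `V` is a
`kG`-submodule of `M` with `soc^N Q ≤ V ≤ Q`, then `α(g) := σ ∘ (g·)` (σ the projection onto
`Q` along `R`) consists of invertible maps and exhibits `(Q,V)` as a strongly `G`-stable pair:
`α(1) = 1`, `α(g)ρ(n) = ρ(gng⁻¹)α(g)`, `α(gn) = α(g)ρ(n)` and `α(g)v = g·v` for `v ∈ V`. -/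
theorem strongly_stable_of_direct_summand
    {k : Type*} [Field k] {M : Type*} [AddCommGroup M] [Module k M]
    {G : Type*} [Group G] (N : Subgroup G) (hN : N.Normal)
    (π : G →* (M →ₗ[k] M)ˣ)
    (Q R : Submodule k M) [FiniteDimensional k ↥Q]
    (hcompl : IsCompl Q R)
    (hQ : NStable N π Q) (hR : NStable N π R)
    (V : Submodule k M) (hVQ : V ≤ Q)
    (hVG : ∀ g : G, ∀ x ∈ V, (π g).1 x ∈ V)
    (hsoc : socN N π Q ≤ V) :
    let proj : M →ₗ[k] ↥Q := Q.linearProjOfIsCompl R hcompl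
    let alpha : G → (↥Q →ₗ[k] ↥Q) := fun g => proj ∘ₗ ((π g).1 ∘ₗ Q.subtype)
    let rhoN : ↥N → (↥Q →ₗ[k] ↥Q) := fun n => ((π ↑n).1).restrict (hQ n)
    (∀ g : G, Function.Bijective (alpha g)) ∧
    alpha 1 = LinearMap.id ∧
    (∀ (g : G) (n : ↥N),
      alpha g ∘ₗ rhoN n = rhoN ⟨g * ↑n * g⁻¹, hN.conj_mem ↑n n.2 g⟩ ∘ₗ alpha g) ∧
    (∀ (g : G) (n : ↥N), alpha (g * ↑n) = alpha g ∘ₗ rhoN n) ∧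
    (∀ (g : G) (v : ↥Q), (v : M) ∈ V → ((alpha g v : ↥Q) : M) = (π g).1 ↑v) := by
  intro proj alpha rhoN
  -- basic facts about proj
  have hprojQ : ∀ x : M, x ∈ Q → ((proj x : ↥Q) : M) = x := by
    intro x hx
    have := Submodule.projectionOnto_apply_left hcompl ⟨x, hx⟩
    exact congrArg (Subtype.val) this
  have hprojR : ∀ x : M, x ∈ R → proj x = 0 := by
    intro x hx
    exact Submodule.projectionOnto_apply_of_mem_right hcompl hx
  have halpha : ∀ (g : G) (x : ↥Q), alpha g x = proj ((π g).1 (x : M)) := fun _ _ => rfl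
  have hrho : ∀ (n : ↥N) (x : ↥Q), ((rhoN n x : ↥Q) : M) = (π ↑n).1 (x : M) :=
    fun _ _ => rfl
  have happ : ∀ (a b : G) (x : M), (π a).1 ((π b).1 x) = (π (a * b)).1 x := by
    intro a b x
    rw [map_mul, Units.val_mul, Module.End.mul_apply]
  -- proj commutes with the N-action
  have hcomm : ∀ n : ↥N, ∀ y : M,
      ((proj ((π ↑n).1 y) : ↥Q) : M) = (π ↑n).1 ((proj y : ↥Q) : M) := by
    intro n y
    have hyR : y - ((proj y : ↥Q) : M) ∈ R := by
      have h0 : proj (y - ((proj y : ↥Q) : M)) = 0 := by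
        have h1 : proj ((proj y : ↥Q) : M) = proj y :=
          Subtype.ext (hprojQ _ (proj y).2)
        rw [map_sub, h1, sub_self]
      have hk : LinearMap.ker proj = R := by
        exact Submodule.linearProjOfIsCompl_ker hcompl
      rw [← hk]; exact h0
    have hdecomp : (π ↑n).1 y =
        (π ↑n).1 ((proj y : ↥Q) : M) + (π ↑n).1 (y - ((proj y : ↥Q) : M)) := by
      rw [← map_add]; congr 1; abel
    rw [hdecomp, map_add]
    have h1 : ((proj ((π ↑n).1 ((proj y : ↥Q) : M)) : ↥Q) : M)
        = (π ↑n).1 ((proj y : ↥Q) : M) := hprojQ _ (hQ n _ (proj y).2)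
    have h2 : proj ((π ↑n).1 (y - ((proj y : ↥Q) : M))) = 0 :=
      hprojR _ (hR n _ hyR)
    rw [Submodule.coe_add, h1, h2]
    simp
  -- the conjugation identity, pointwise
  have hconj : ∀ (g : G) (n : ↥N) (x : ↥Q),
      alpha g (rhoN n x) = rhoN ⟨g * ↑n * g⁻¹, hN.conj_mem ↑n n.2 g⟩ (alpha g x) := by
    intro g n x
    apply Subtype.ext
    have e1 : ((alpha g (rhoN n x) : ↥Q) : M)
        = ((proj ((π g).1 ((π ↑n).1 (x : M))) : ↥Q) : M) := by
      rw [halpha, hrho]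
    have e2 : ((rhoN ⟨g * ↑n * g⁻¹, hN.conj_mem ↑n n.2 g⟩ (alpha g x) : ↥Q) : M)
        = (π (g * ↑n * g⁻¹)).1 ((proj ((π g).1 (x : M)) : ↥Q) : M) := by
      rw [hrho, halpha]
    have hsw : (π g).1 ((π ↑n).1 (x : M)) = (π (g * ↑n * g⁻¹)).1 ((π g).1 (x : M)) := by
      rw [happ, happ]
      congr 2
      group
    rw [e1, e2, hsw]
    exact hcomm ⟨g * ↑n * g⁻¹, hN.conj_mem ↑n n.2 g⟩ _
  -- α(g) v = g · v for v ∈ V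
  have hV : ∀ (g : G) (v : ↥Q), (v : M) ∈ V → ((alpha g v : ↥Q) : M) = (π g).1 ↑v := by
    intro g v hv
    rw [halpha]
    exact hprojQ _ (hVQ (hVG g _ hv))
  -- injectivity of each α(g)
  have hinj : ∀ g : G, Function.Injective (alpha g) := by
    intro g
    rw [← LinearMap.ker_eq_bot]
    by_contra hker
    set K : Submodule k M := (LinearMap.ker (alpha g)).map Q.subtype with hK
    have hKQ : K ≤ Q := by
      rintro x ⟨y, _, rfl⟩; exact y.2
    have hKst : NStable N π K := by
      rintro n x ⟨y, hy, rfl⟩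
      refine ⟨rhoN n y, ?_, (hrho n y).symm⟩
      have : alpha g (rhoN n y) = 0 := by
        rw [hconj g n y, LinearMap.mem_ker.mp hy]; simp
      exact LinearMap.mem_ker.mpr this
    have hKne : K ≠ ⊥ := by
      intro h
      apply hker
      rw [eq_bot_iff]
      intro y hy
      have hyK : (y : M) ∈ K := ⟨y, hy, rfl⟩
      rw [h] at hyK
      have h0 : (y : M) = 0 := (Submodule.mem_bot k).mp hyK
      exact (Submodule.mem_bot k).mpr (Subtype.ext h0)
    -- find a minimal nonzero N-stable submodule of K
    haveI : FiniteDimensional k ↥K := Submodule.finiteDimensional_of_le hKQ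
    have hPex : ∃ d, ∃ W : Submodule k M,
        (W ≤ K ∧ NStable N π W ∧ W ≠ ⊥) ∧ Module.finrank k ↥W = d :=
      ⟨_, K, ⟨le_refl K, hKst, hKne⟩, rfl⟩
    obtain ⟨W, ⟨hWK, hWst, hWne⟩, hWd⟩ := Nat.sInf_mem hPex
    haveI : FiniteDimensional k ↥W := Submodule.finiteDimensional_of_le (hWK.trans hKQ)
    have hWsoc : W ≤ socN N π Q := by
      apply le_sSup
      refine ⟨hWK.trans hKQ, hWst, bot_lt_iff_ne_bot.mpr hWne, ?_⟩
      intro T hTst hTW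
      rcases eq_or_ne T ⊥ with h | h
      · exact Or.inl h
      · right
        have hle : sInf {d | ∃ W : Submodule k M,
            (W ≤ K ∧ NStable N π W ∧ W ≠ ⊥) ∧ Module.finrank k ↥W = d}
            ≤ Module.finrank k ↥T :=
          Nat.sInf_le ⟨T, ⟨hTW.trans hWK, hTst, h⟩, rfl⟩
        have hle2 : Module.finrank k ↥W ≤ Module.finrank k ↥T := by
          rw [hWd]; exact hle
        exact Submodule.eq_of_le_of_finrank_le hTW hle2
    -- W ≤ V, but α(g) acts as g on V, hence is injective there
    obtain ⟨w, hwW, hwne⟩ := Submodule.exists_mem_ne_zero_of_ne_bot hWne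
    obtain ⟨y, hy, hyw⟩ := hWK hwW
    have hwV : w ∈ V := hsoc (hWsoc hwW)
    have hval : ((alpha g y : ↥Q) : M) = (π g).1 w := by
      rw [← hyw] at hwV ⊢; exact hV g y hwV
    rw [LinearMap.mem_ker.mp hy] at hval
    have hg0 : (π g).1 w = 0 := by simpa using hval.symm
    apply hwne
    calc w = (((π g)⁻¹ * (π g)).1) w := by rw [inv_mul_cancel]; rfl
      _ = ((π g)⁻¹.1) ((π g).1 w) := rfl
      _ = 0 := by rw [hg0, map_zero]
  refine ⟨?_, ?_, ?_, ?_, hV⟩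
  · intro g
    exact ⟨hinj g, (LinearMap.injective_iff_surjective).mp (hinj g)⟩
  · ext x
    have h1 : (π (1 : G)).1 (x : M) = (x : M) := by rw [map_one]; rfl
    rw [halpha, h1, LinearMap.id_coe, id_eq]
    exact hprojQ _ x.2
  · intro g n
    ext x
    rw [LinearMap.comp_apply, LinearMap.comp_apply]
    exact congrArg Subtype.val (hconj g n x)
  · intro g n
    ext x
    have h2 : ((alpha (g * ↑n) x : ↥Q) : M) = ((alpha g (rhoN n x) : ↥Q) : M) := by
      rw [halpha, halpha, hrho, happ]
    exact h2
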